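/- Fix a real number p < 0. Define Ei(x) = ∫_{x}^{∞} e^{−v}/v dv for x > 0, and for integers 1 ≤ b ≤ k let H(b,k) = Σ_{j=b+1}^{k} 1/j (with H(k,k) = 0) and c_{b,k,p} = (1/p)·( ((k+1)/b)^{p}/(1−p) − 1 ) / (1 + H(b,k)). Then lim_{k→∞} (1/k)·Σ_{b=1}^{k} c_{b,k,p} = e^{1−p}·Ei(1−p)/(p(1−p)) − (e/p)·Ei(1). -/

import Mathlib

open Finset Filter Real
open MeasureTheory

/-- The exponential integral `Ei(x) = ∫_{x}^{∞} e^{−v}/v dv` (for `x > 0`). -/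
noncomputable def Ei (x : ℝ) : ℝ := ∫ v in Set.Ioi x, Real.exp (-v) / v

/-- The tail harmonic sum `H(b,k) = ∑_{j=b+1}^{k} 1/j`, with `H(k,k) = 0`. -/
noncomputable def Htail (b k : ℕ) : ℝ := ∑ j ∈ Finset.Icc (b + 1) k, (1 : ℝ) / (j : ℝ)

/-- The asymptotic bias coefficient of the lower-trimmed Hill statistic `T_{b,k}`:
`c_{b,k,p} = (1/p)·( ((k+1)/b)^p/(1−p) − 1 )/(1 + H(b,k))`. -/
noncomputable def cCoeff (b k : ℕ) (p : ℝ) : ℝ :=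
  (1 / p) * ((((k : ℝ) + 1) / (b : ℝ)) ^ p / (1 - p) - 1) / (1 + Htail b k)

lemma Htail_nonneg (b k : ℕ) : 0 ≤ Htail b k :=
  Finset.sum_nonneg fun j _ => by positivity

lemma Htail_le {b k : ℕ} (hb : 1 ≤ b) (hbk : b ≤ k) :
    Htail b k ≤ Real.log k - Real.log b := by
  induction k, hbk using Nat.le_induction with
  | base => simp [Htail]
  | succ k hk ih =>
    have hk0 : (0:ℝ) < k := by exact_mod_cast (by omega : 0 < k)
    rw [Htail, Finset.sum_Icc_succ_top (by omega)]
    have h1 : Real.log ((k:ℝ) / (k+1)) ≤ (k:ℝ)/(k+1) - 1 :=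
      Real.log_le_sub_one_of_pos (by positivity)
    have h2 : Real.log ((k:ℝ)/(k+1)) = Real.log k - Real.log (k+1) :=
      Real.log_div (by positivity) (by positivity)
    have h3 : (1:ℝ)/((k:ℝ)+1) ≤ Real.log ((k:ℝ)+1) - Real.log k := by
      rw [h2] at h1
      have : (k:ℝ)/(k+1) - 1 = -(1/((k:ℝ)+1)) := by field_simp; ring
      linarith [h1, this.le]
    have := ih
    rw [Htail] at this
    push_cast
    linarith

lemma le_Htail {b k : ℕ} (hbk : b ≤ k) :
    Real.log (k+1) - Real.log (b+1) ≤ Htail b k := by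
  induction k, hbk using Nat.le_induction with
  | base => simp [Htail]
  | succ k hk ih =>
    rw [Htail, Finset.sum_Icc_succ_top (by omega)]
    have h1 : Real.log (((k:ℝ)+2) / (k+1)) ≤ ((k:ℝ)+2)/(k+1) - 1 :=
      Real.log_le_sub_one_of_pos (by positivity)
    have h2 : Real.log (((k:ℝ)+2)/(k+1)) = Real.log ((k:ℝ)+2) - Real.log (k+1) :=
      Real.log_div (by positivity) (by positivity)
    have h3 : ((k:ℝ)+2)/(k+1) - 1 = 1/((k:ℝ)+1) := by field_simp; ring
    have := ih
    rw [Htail] at this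
    push_cast
    push_cast at this
    have h5 : ((k:ℝ) + 1 + 1) = (k:ℝ) + 2 := by ring
    rw [h5]
    linarith

noncomputable def gfun (p x : ℝ) : ℝ :=
  (1 / p) * ((1 / x) ^ p / (1 - p) - 1) / (1 - Real.log x)

lemma cCoeff_bounds (p : ℝ) (hp : p < 0) {b k : ℕ} (hb : 1 ≤ b) (hbk : b ≤ k) :
    0 ≤ cCoeff b k p ∧ cCoeff b k p ≤ -1 / p := by
  have hb0 : (0:ℝ) < b := by exact_mod_cast hb
  have hbase : (1:ℝ) ≤ ((k : ℝ) + 1) / b := by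
    rw [le_div_iff₀ hb0]; push_cast
    have : (b:ℝ) ≤ k := by exact_mod_cast hbk
    linarith
  have hy0 : 0 < (((k : ℝ) + 1) / (b : ℝ)) ^ p := Real.rpow_pos_of_pos (by linarith) p
  have hy1 : (((k : ℝ) + 1) / (b : ℝ)) ^ p ≤ 1 :=
    Real.rpow_le_one_of_one_le_of_nonpos hbase hp.le
  unfold cCoeff
  set y := (((k : ℝ) + 1) / (b : ℝ)) ^ p with hy
  clear_value y
  have h1p : (1:ℝ) < 1 - p := by linarith
  have hip : (1:ℝ)/p < 0 := div_neg_of_pos_of_neg one_pos hp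
  have hq : 0 ≤ y / (1 - p) := by positivity
  have ht0 : y / (1 - p) - 1 ≤ 0 := by
    have : y / (1-p) ≤ 1 := by
      rw [div_le_one (by linarith)]; linarith
    linarith
  have hnum0 : 0 ≤ (1/p) * (y / (1-p) - 1) := by nlinarith
  have hnum1 : (1/p) * (y / (1-p) - 1) ≤ -(1/p) := by
    have hprod : (1/p) * (y / (1-p)) ≤ 0 := mul_nonpos_iff.mpr (Or.inr ⟨hip.le, hq⟩)
    have : (1/p) * (y / (1-p) - 1) = (1/p) * (y/(1-p)) - 1/p := by ring
    rw [this]; linarith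
  have hD : (1:ℝ) ≤ 1 + Htail b k := by linarith [Htail_nonneg b k]
  constructor
  · exact div_nonneg hnum0 (by linarith)
  · calc (1/p) * (y / (1-p) - 1) / (1 + Htail b k) ≤ (1/p) * (y / (1-p) - 1) / 1 :=
        div_le_div_of_nonneg_left hnum0 (by norm_num) hD
    _ = (1/p) * (y / (1-p) - 1) := by ring
    _ ≤ -1/p := by rw [show (-1:ℝ)/p = -(1/p) by ring]; exact hnum1

lemma tendsto_ratio (x : ℝ) (hx0 : 0 < x) (hx1 : x ≤ 1) :
    Tendsto (fun k : ℕ => (⌈(k:ℝ) * x⌉₊ : ℝ) / k) atTop (nhds x) := by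
  apply tendsto_of_tendsto_of_tendsto_of_le_of_le' (g := fun _ : ℕ => x)
      (h := fun k : ℕ => x + 1/(k:ℝ)) tendsto_const_nhds
  · simpa using tendsto_const_nhds.add (tendsto_one_div_atTop_nhds_zero_nat (𝕜 := ℝ))
  · filter_upwards [eventually_ge_atTop 1] with k hk
    have hk0 : (0:ℝ) < k := by exact_mod_cast hk
    rw [le_div_iff₀ hk0]
    calc x * k = k * x := by ring
    _ ≤ ⌈(k:ℝ)*x⌉₊ := Nat.le_ceil _
  · filter_upwards [eventually_ge_atTop 1] with k hk
    have hk0 : (0:ℝ) < k := by exact_mod_cast hk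
    rw [div_le_iff₀ hk0]
    have := (Nat.ceil_lt_add_one (by positivity : (0:ℝ) ≤ (k:ℝ)*x)).le
    calc (⌈(k:ℝ)*x⌉₊ : ℝ) ≤ k*x + 1 := this
    _ = (x + 1/k) * k := by field_simp

lemma tendsto_ratio' (x : ℝ) (hx0 : 0 < x) (hx1 : x ≤ 1) :
    Tendsto (fun k : ℕ => (⌈(k:ℝ) * x⌉₊ : ℝ) / ((k:ℝ)+1)) atTop (nhds x) := by
  have hk1 : Tendsto (fun k : ℕ => (k:ℝ)/((k:ℝ)+1)) atTop (nhds 1) :=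
    tendsto_natCast_div_add_atTop (1:ℝ)
  have := (tendsto_ratio x hx0 hx1).mul hk1
  rw [mul_one] at this
  apply this.congr'
  filter_upwards [eventually_ge_atTop 1] with k hk
  have hk0 : (k:ℝ) ≠ 0 := by positivity
  field_simp

lemma tendsto_Htail (x : ℝ) (hx0 : 0 < x) (hx1 : x ≤ 1) :
    Tendsto (fun k : ℕ => Htail ⌈(k:ℝ) * x⌉₊ k) atTop (nhds (-Real.log x)) := by
  have hlog : ContinuousAt Real.log x := Real.continuousAt_log hx0.ne'
  have hupper : Tendsto (fun k : ℕ => Real.log k - Real.log (⌈(k:ℝ)*x⌉₊ : ℝ))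
      atTop (nhds (-Real.log x)) := by
    have h1 := (hlog.tendsto.comp (tendsto_ratio x hx0 hx1)).neg
    apply h1.congr'
    filter_upwards [eventually_ge_atTop 1] with k hk
    have hk0 : (0:ℝ) < k := by exact_mod_cast hk
    have hc0 : (0:ℝ) < (⌈(k:ℝ)*x⌉₊ : ℝ) := by
      exact_mod_cast Nat.ceil_pos.mpr (by positivity)
    simp only [Function.comp]
    rw [Real.log_div hc0.ne' hk0.ne']
    ring
  have hlower : Tendsto (fun k : ℕ => Real.log ((k:ℝ)+1) - Real.log ((⌈(k:ℝ)*x⌉₊ : ℝ)+1))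
      atTop (nhds (-Real.log x)) := by
    have hB1 : Tendsto (fun k : ℕ => ((⌈(k:ℝ)*x⌉₊ : ℝ)+1) / ((k:ℝ)+1)) atTop (nhds x) := by
      have h0 : Tendsto (fun k : ℕ => 1/((k:ℝ)+1)) atTop (nhds 0) :=
        tendsto_one_div_add_atTop_nhds_zero_nat
      have := (tendsto_ratio' x hx0 hx1).add h0
      rw [add_zero] at this
      apply this.congr'
      filter_upwards with k
      rw [← add_div]
    have h1 := (hlog.tendsto.comp hB1).neg
    apply h1.congr'
    filter_upwards with k
    have hc0 : (0:ℝ) < (⌈(k:ℝ)*x⌉₊ : ℝ)+1 := by positivity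
    have hk0 : (0:ℝ) < (k:ℝ)+1 := by positivity
    simp only [Function.comp]
    rw [Real.log_div hc0.ne' hk0.ne']
    ring
  apply tendsto_of_tendsto_of_tendsto_of_le_of_le' hlower hupper
  · filter_upwards [eventually_ge_atTop 1] with k hk
    have hbk : ⌈(k:ℝ)*x⌉₊ ≤ k :=
      Nat.ceil_le.mpr (mul_le_of_le_one_right (by positivity) hx1)
    exact le_Htail hbk
  · filter_upwards [eventually_ge_atTop 1] with k hk
    have hk0 : (0:ℝ) < k := by exact_mod_cast hk
    have hb1 : 1 ≤ ⌈(k:ℝ)*x⌉₊ := Nat.ceil_pos.mpr (by positivity)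
    have hbk : ⌈(k:ℝ)*x⌉₊ ≤ k :=
      Nat.ceil_le.mpr (mul_le_of_le_one_right (by positivity) hx1)
    exact Htail_le hb1 hbk

lemma tendsto_cCoeff (p : ℝ) (hp : p < 0) {x : ℝ} (hx0 : 0 < x) (hx1 : x ≤ 1) :
    Tendsto (fun k : ℕ => cCoeff ⌈(k:ℝ) * x⌉₊ k p) atTop (nhds (gfun p x)) := by
  have hinv : Tendsto (fun k : ℕ => ((k:ℝ)+1)/(⌈(k:ℝ)*x⌉₊ : ℝ)) atTop (nhds (1/x)) := by
    have := (tendsto_ratio' x hx0 hx1).inv₀ hx0.ne'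
    rw [← one_div] at this
    apply this.congr
    intro k
    rw [inv_div]
  have hy : Tendsto (fun k : ℕ => (((k:ℝ)+1)/(⌈(k:ℝ)*x⌉₊ : ℝ)) ^ p) atTop
      (nhds ((1/x) ^ p)) := hinv.rpow_const (Or.inl (by positivity))
  have hH := tendsto_Htail x hx0 hx1
  have hden : (1:ℝ) + -Real.log x ≠ 0 := by
    have := Real.log_nonpos hx0.le hx1
    linarith
  have hnum : Tendsto (fun k : ℕ => (1/p) * ((((k:ℝ)+1)/(⌈(k:ℝ)*x⌉₊ : ℝ))^p/(1-p) - 1))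
      atTop (nhds ((1/p) * ((1/x)^p/(1-p) - 1))) :=
    ((hy.div_const (1-p)).sub_const 1).const_mul (1/p)
  have hfin := hnum.div (hH.const_add 1) hden
  unfold cCoeff gfun
  convert hfin using 2
  · rfl
  · ring


lemma ceil_eq_on_Ioc {k i : ℕ} (hik : i < k) {x : ℝ}
    (hx : x ∈ Set.Ioc ((i:ℝ)/k) (((i+1:ℕ):ℝ)/k)) : ⌈(k:ℝ)*x⌉₊ = i + 1 := by
  have hk0 : (0:ℝ) < k := by exact_mod_cast (by omega : 0 < k)
  rw [Nat.ceil_eq_iff (Nat.succ_ne_zero i)]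
  obtain ⟨h1, h2⟩ := hx
  push_cast at h2 ⊢
  constructor
  · calc (i:ℝ) = ((i:ℝ)/k)*k := by field_simp
    _ < x * k := by apply mul_lt_mul_of_pos_right h1 hk0
    _ = (k:ℝ)*x := by ring
  · calc (k:ℝ)*x = x * k := by ring
    _ ≤ (((i:ℝ)+1)/k)*k := by apply mul_le_mul_of_nonneg_right h2 hk0.le
    _ = (i:ℝ)+1 := by field_simp

lemma step_integral (p : ℝ) {k : ℕ} (hk : 1 ≤ k) :
    ∫ x in Set.Ioc (0:ℝ) 1, cCoeff ⌈(k:ℝ)*x⌉₊ k p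
      = (1/(k:ℝ)) * ∑ b ∈ Finset.Icc 1 k, cCoeff b k p := by
  have hk0 : (0:ℝ) < k := by exact_mod_cast hk
  set f : ℝ → ℝ := fun x => cCoeff ⌈(k:ℝ)*x⌉₊ k p with hf
  set a : ℕ → ℝ := fun i => (i:ℝ)/k with ha
  have hmono : ∀ i : ℕ, a i ≤ a (i+1) := by
    intro i
    simp only [ha]
    gcongr
    push_cast; linarith
  have key : ∀ i < k, ∫ x in (a i)..(a (i+1)), f x = cCoeff (i+1) k p / k := by
    intro i hik
    rw [intervalIntegral.integral_of_le (hmono i)]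
    have heq : Set.EqOn f (fun _ => cCoeff (i+1) k p) (Set.Ioc (a i) (a (i+1))) := by
      intro x hx
      have : ⌈(k:ℝ)*x⌉₊ = i + 1 := ceil_eq_on_Ioc hik hx
      simp only [hf, this]
    rw [setIntegral_congr_fun measurableSet_Ioc heq, setIntegral_const]
    rw [measureReal_def, Real.volume_Ioc, ENNReal.toReal_ofReal (by linarith [hmono i])]
    have : a (i+1) - a i = 1/k := by
      simp only [ha]; push_cast; field_simp; ring
    rw [this, smul_eq_mul]; ring
  have hint : ∀ i < k, IntervalIntegrable f volume (a i) (a (i+1)) := by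
    intro i hik
    rw [intervalIntegrable_iff_integrableOn_Ioc_of_le (hmono i)]
    refine IntegrableOn.congr_fun (f := fun _ => cCoeff (i+1) k p)
      (integrableOn_const measure_Ioc_lt_top.ne) ?_ measurableSet_Ioc
    intro x hx
    have : ⌈(k:ℝ)*x⌉₊ = i + 1 := ceil_eq_on_Ioc hik hx
    simp only [hf, this]
  have hsum := intervalIntegral.sum_integral_adjacent_intervals (f := f) (μ := volume)
      (a := a) (n := k) hint
  have ha0 : a 0 = 0 := by simp [ha]
  have hak : a k = 1 := by simp only [ha]; field_simp
  rw [ha0, hak] at hsum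
  rw [intervalIntegral.integral_of_le (by norm_num : (0:ℝ) ≤ 1)] at hsum
  rw [← hsum]
  rw [Finset.sum_congr rfl (fun i hi => key i (Finset.mem_range.mp hi))]
  have : Finset.Icc 1 k = Finset.Ico 1 (k+1) := by rw [Finset.Ico_add_one_right_eq_Icc]
  rw [this, Finset.sum_Ico_eq_sum_range]
  simp only [Nat.add_sub_cancel]
  rw [Finset.mul_sum]
  apply Finset.sum_congr rfl
  intro i _
  rw [add_comm 1 i]
  ring

lemma image_exp : (fun v => Real.exp (1 - v)) '' (Set.Ioi (1:ℝ)) = Set.Ioo 0 1 := by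
  ext x
  simp only [Set.mem_image, Set.mem_Ioi, Set.mem_Ioo]
  constructor
  · rintro ⟨v, hv, rfl⟩
    exact ⟨Real.exp_pos _, Real.exp_lt_one_iff.mpr (by linarith)⟩
  · rintro ⟨hx0, hx1⟩
    exact ⟨1 - Real.log x, by nlinarith [Real.log_neg hx0 hx1],
      by rw [sub_sub_cancel, Real.exp_log hx0]⟩

lemma integrable_aux {c : ℝ} (hc : 0 < c) :
    IntegrableOn (fun v => Real.exp (-(c*v)) / v) (Set.Ioi (1:ℝ)) := by
  have hbase := exp_neg_integrableOn_Ioi 1 hc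
  apply Integrable.mono hbase
  · exact ((Real.measurable_exp.comp (measurable_id.const_mul c).neg).div
      measurable_id).aestronglyMeasurable
  · rw [ae_restrict_iff' measurableSet_Ioi]
    filter_upwards with v hv
    rw [Set.mem_Ioi] at hv
    have h1 : (0:ℝ) < v := by linarith
    rw [Real.norm_eq_abs, Real.norm_eq_abs, abs_of_nonneg (by positivity),
      abs_of_nonneg (by positivity), neg_mul]
    exact div_le_self (by positivity) (by linarith)

lemma Ei_scale {c : ℝ} (hc : 0 < c) :
    ∫ v in Set.Ioi (1:ℝ), Real.exp (-(c*v)) / v = Ei c := by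
  have h := MeasureTheory.integral_comp_mul_left_Ioi
    (fun w => c * (Real.exp (-w) / w)) 1 hc
  have heq : (fun v : ℝ => Real.exp (-(c*v)) / v)
      = fun v => c * (Real.exp (-(c*v)) / (c*v)) := by
    funext v
    rw [mul_div_assoc', mul_div_mul_left _ _ hc.ne']
  rw [heq]
  rw [h, mul_one, MeasureTheory.integral_const_mul, Ei, smul_eq_mul,
    ← mul_assoc, inv_mul_cancel₀ hc.ne', one_mul]

lemma integral_gfun (p : ℝ) (hp : p < 0) :
    ∫ x in Set.Ioc (0:ℝ) 1, gfun p x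
      = Real.exp (1-p) * Ei (1-p) / (p*(1-p)) - Real.exp 1 / p * Ei 1 := by
  have h1p : (0:ℝ) < 1 - p := by linarith
  have hp0 : p ≠ 0 := hp.ne
  rw [MeasureTheory.integral_Ioc_eq_integral_Ioo, ← image_exp]
  have hderiv : ∀ v ∈ Set.Ioi (1:ℝ), HasDerivWithinAt (fun v => Real.exp (1-v))
      (-Real.exp (1-v)) (Set.Ioi 1) v := by
    intro v _
    have h := (Real.hasDerivAt_exp (1-v)).comp v ((hasDerivAt_id v).const_sub 1)
    simpa [Function.comp_def] using h.hasDerivWithinAt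
  have hinj : Set.InjOn (fun v => Real.exp (1-v)) (Set.Ioi 1) := by
    have : Function.Injective (fun v : ℝ => Real.exp (1-v)) :=
      Real.exp_injective.comp sub_right_injective
    exact this.injOn
  rw [integral_image_eq_integral_abs_deriv_smul measurableSet_Ioi hderiv hinj]
  have heq2 : Set.EqOn (fun v => |(-Real.exp (1-v))| • gfun p (Real.exp (1-v)))
      (fun v => Real.exp (1-p)/(p*(1-p)) * (Real.exp (-((1-p)*v)) / v)
        - Real.exp 1/p * (Real.exp (-v)/v)) (Set.Ioi 1) := by
    intro v hv
    rw [Set.mem_Ioi] at hv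
    have hv0 : v ≠ 0 := by linarith
    simp only [smul_eq_mul, abs_neg, abs_of_pos (Real.exp_pos _), gfun, Real.log_exp,
      one_div (Real.exp (1-v)), ← Real.exp_neg]
    rw [← Real.exp_mul]
    have hA : Real.exp (1-v) = Real.exp 1 * Real.exp (-v) := by
      rw [← Real.exp_add]; congr 1 <;> ring
    have hB : Real.exp (-(1-v)*p) = Real.exp (-p) * Real.exp (p*v) := by
      rw [← Real.exp_add]; congr 1 <;> ring
    have hC : Real.exp (1-p) = Real.exp 1 * Real.exp (-p) := by
      rw [← Real.exp_add]; congr 1 <;> ring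
    have hD : Real.exp (-((1-p)*v)) = Real.exp (-v) * Real.exp (p*v) := by
      rw [← Real.exp_add]; congr 1 <;> ring
    have hsub : 1 - (1 - v) = v := by ring
    rw [hsub, hA, hB, hC, hD]
    field_simp
  rw [setIntegral_congr_fun measurableSet_Ioi heq2]
  have hi1 : IntegrableOn (fun v => Real.exp (-((1-p)*v))/v) (Set.Ioi (1:ℝ)) :=
    integrable_aux h1p
  have hi2 : IntegrableOn (fun v => Real.exp (-v)/v) (Set.Ioi (1:ℝ)) := by
    have := integrable_aux one_pos
    simpa using this
  rw [MeasureTheory.integral_sub (hi1.const_mul _) (hi2.const_mul _),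
    MeasureTheory.integral_const_mul, MeasureTheory.integral_const_mul,
    Ei_scale h1p]
  have : ∫ v in Set.Ioi (1:ℝ), Real.exp (-v)/v = Ei 1 := rfl
  rw [this]
  ring

/-- For `p < 0`,
`lim_{k→∞} (1/k)·∑_{b=1}^{k} c_{b,k,p} = e^{1−p}·Ei(1−p)/(p(1−p)) − (e/p)·Ei(1)`. -/
theorem limit_average_bias_coefficient (p : ℝ) (hp : p < 0) :
    Filter.Tendsto
      (fun k : ℕ => (1 / (k : ℝ)) * ∑ b ∈ Finset.Icc 1 k, cCoeff b k p)
      Filter.atTop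
      (nhds (Real.exp (1 - p) * Ei (1 - p) / (p * (1 - p)) - Real.exp 1 / p * Ei 1)) := by
  have hdct : Tendsto (fun k : ℕ => ∫ x in Set.Ioc (0:ℝ) 1, cCoeff ⌈(k:ℝ)*x⌉₊ k p)
      atTop (nhds (∫ x in Set.Ioc (0:ℝ) 1, gfun p x)) := by
    apply MeasureTheory.tendsto_integral_filter_of_dominated_convergence
      (fun _ => -1/p)
    · filter_upwards with k
      exact ((measurable_from_top (f := fun b : ℕ => cCoeff b k p)).comp
        (Nat.measurable_ceil.comp (measurable_id.const_mul (k:ℝ)))).aestronglyMeasurable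
    · filter_upwards [eventually_ge_atTop 1] with k hk
      rw [MeasureTheory.ae_restrict_iff' measurableSet_Ioc]
      filter_upwards with x hx
      obtain ⟨hx0, hx1⟩ := hx
      have hkR : (0:ℝ) < k := by exact_mod_cast hk
      have hb1 : 1 ≤ ⌈(k:ℝ)*x⌉₊ := Nat.ceil_pos.mpr (by positivity)
      have hbk : ⌈(k:ℝ)*x⌉₊ ≤ k :=
        Nat.ceil_le.mpr (mul_le_of_le_one_right (by positivity) hx1)
      obtain ⟨h1, h2⟩ := cCoeff_bounds p hp hb1 hbk
      rw [Real.norm_eq_abs, abs_of_nonneg h1]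
      exact h2
    · exact MeasureTheory.integrableOn_const measure_Ioc_lt_top.ne
    · rw [MeasureTheory.ae_restrict_iff' measurableSet_Ioc]
      filter_upwards with x hx
      exact tendsto_cCoeff p hp hx.1 hx.2
  rw [integral_gfun p hp] at hdct
  apply hdct.congr'
  filter_upwards [eventually_ge_atTop 1] with k hk
  exact step_integral p hk
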